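/- A symmetric Laurent polynomial f ∈ K[T₁^{±1},…,T_n^{±1}]^{S_n}, when evaluated at (c₁X₁,…,c₁X_{n₁}, c₂Y₁,…,c₂Y_{n₂}) with c₁, c₂ ∈ K^×, yields an element of K[X₁^{±1},…,X_{n₁}^{±1}]^{S_{n₁}} ⊗_K K[Y₁^{±1},…,Y_{n₂}^{±1}]^{S_{n₂}}, i.e., the substitution map restricted to S_n-invariants lands in the tensor product of invariant subrings. Moreover this restricted map θ is injective. -/

import Mathlib

open Finset
open scoped TensorProduct

/-- The additive automorphism of `ℤⁿ` permuting the coordinates by `σ`. -/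
def permAddEquiv (n : ℕ) (σ : Equiv.Perm (Fin n)) : (Fin n → ℤ) ≃+ (Fin n → ℤ) :=
  { Equiv.piCongrLeft' (fun _ => ℤ) σ with map_add' := fun _ _ => rfl }

/-- The action of `σ ∈ Sₙ` on the Laurent polynomial ring `K[ℤⁿ]`, permuting the variables. -/
noncomputable def permAct (K : Type*) [CommSemiring K] (n : ℕ) (σ : Equiv.Perm (Fin n)) :
    AddMonoidAlgebra K (Fin n → ℤ) ≃ₐ[K] AddMonoidAlgebra K (Fin n → ℤ) :=
  AddMonoidAlgebra.domCongr K K (permAddEquiv n σ)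

/-- The subalgebra `K[X₁^{±1},…,Xₙ^{±1}]^{Sₙ}` of symmetric Laurent polynomials. -/
noncomputable def symmSub (K : Type*) [CommSemiring K] (n : ℕ) :
    Subalgebra K (AddMonoidAlgebra K (Fin n → ℤ)) where
  carrier := {f | ∀ σ : Equiv.Perm (Fin n), permAct K n σ f = f}
  mul_mem' {a b} ha hb σ := by rw [map_mul, ha σ, hb σ]
  add_mem' {a b} ha hb σ := by rw [map_add, ha σ, hb σ]
  algebraMap_mem' r σ := by rw [AlgEquiv.commutes]

section Aux

variable {K : Type*} [Field K]

lemma permAct_single {n : ℕ} (σ : Equiv.Perm (Fin n)) (a : Fin n → ℤ) (r : K) :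
    permAct K n σ (AddMonoidAlgebra.single a r) =
      AddMonoidAlgebra.single (a ∘ ⇑σ.symm) r := by
  have : (permAddEquiv n σ) a = a ∘ ⇑σ.symm := rfl
  rw [permAct, AddMonoidAlgebra.domCongr_single, this]

/-- The orbit of a point of `ℤⁿ` under the permutation action, as a `Finset`. -/
noncomputable def orb (n : ℕ) (x : Fin n → ℤ) : Finset (Fin n → ℤ) :=
  Finset.image (fun σ : Equiv.Perm (Fin n) => x ∘ ⇑σ) Finset.univ

lemma mem_orb {n : ℕ} {x y : Fin n → ℤ} :
    y ∈ orb n x ↔ ∃ σ : Equiv.Perm (Fin n), x ∘ ⇑σ = y := by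
  simp [orb]

lemma self_mem_orb {n : ℕ} (x : Fin n → ℤ) : x ∈ orb n x :=
  mem_orb.2 ⟨1, rfl⟩

lemma comp_mem_orb_iff {n : ℕ} {x y : Fin n → ℤ} (σ : Equiv.Perm (Fin n)) :
    y ∘ ⇑σ ∈ orb n x ↔ y ∈ orb n x := by
  constructor
  · rintro h
    rcases mem_orb.1 h with ⟨τ, hτ⟩
    refine mem_orb.2 ⟨τ * σ⁻¹, ?_⟩
    funext k
    have := congrFun hτ (σ⁻¹ k)
    simpa using this
  · rintro h
    rcases mem_orb.1 h with ⟨τ, hτ⟩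
    exact mem_orb.2 ⟨τ * σ, by funext k; simpa using congrFun hτ (σ k)⟩

lemma orb_image_comp {n : ℕ} (x : Fin n → ℤ) (σ : Equiv.Perm (Fin n)) :
    Finset.image (fun y => y ∘ ⇑σ) (orb n x) = orb n x := by
  ext z
  simp only [Finset.mem_image]
  constructor
  · rintro ⟨y, hy, rfl⟩
    exact (comp_mem_orb_iff σ).2 hy
  · intro hz
    refine ⟨z ∘ ⇑σ⁻¹, (comp_mem_orb_iff σ⁻¹).2 hz, ?_⟩
    funext k; simp

/-- The orbit sum: a symmetric Laurent polynomial. -/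
noncomputable def mOrb (K : Type*) [Field K] (n : ℕ) (x : Fin n → ℤ) :
    AddMonoidAlgebra K (Fin n → ℤ) :=
  ∑ y ∈ orb n x, AddMonoidAlgebra.single y 1

lemma comp_injOn_orb {n : ℕ} (x : Fin n → ℤ) (σ : Equiv.Perm (Fin n)) :
    ∀ y ∈ orb n x, ∀ z ∈ orb n x, y ∘ ⇑σ = z ∘ ⇑σ → y = z := by
  intro y _ z _ h
  funext k
  simpa using congrFun h (σ.symm k)

lemma mOrb_mem (n : ℕ) (x : Fin n → ℤ) : mOrb K n x ∈ symmSub K n := by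
  intro σ
  rw [mOrb, map_sum]
  simp_rw [permAct_single]
  conv_rhs => rw [← orb_image_comp x σ.symm]
  rw [Finset.sum_image (comp_injOn_orb x σ.symm)]

/-- The product basis of the tensor product of two Laurent polynomial rings. -/
noncomputable def bb (K : Type*) [Field K] (n₁ n₂ : ℕ) :
    Module.Basis ((Fin n₁ → ℤ) × (Fin n₂ → ℤ)) K
      ((AddMonoidAlgebra K (Fin n₁ → ℤ)) ⊗[K] (AddMonoidAlgebra K (Fin n₂ → ℤ))) :=
  Module.Basis.tensorProduct
    (AddMonoidAlgebra.basis (Fin n₁ → ℤ) K)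
    (AddMonoidAlgebra.basis (Fin n₂ → ℤ) K)

lemma bb_apply {n₁ n₂ : ℕ} (x : Fin n₁ → ℤ) (y : Fin n₂ → ℤ) :
    bb K n₁ n₂ (x, y) =
      (AddMonoidAlgebra.single x (1 : K)) ⊗ₜ[K] (AddMonoidAlgebra.single y (1 : K)) := by
  rw [bb, Module.Basis.tensorProduct_apply]
  rfl

lemma bb_repr_tmul {n₁ n₂ : ℕ} (x : Fin n₁ → ℤ) (y : Fin n₂ → ℤ) :
    (bb K n₁ n₂).repr
      ((AddMonoidAlgebra.single x (1 : K)) ⊗ₜ[K] (AddMonoidAlgebra.single y (1 : K))) =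
      Finsupp.single (x, y) 1 := by
  rw [← bb_apply, Module.Basis.repr_self]

lemma addCases_castAdd_eq {n₁ n₂ : ℕ} (x : Fin n₁ → ℤ) (y : Fin n₂ → ℤ) :
    (fun i => (fun k => Fin.addCases x y k) (Fin.castAdd n₂ i)) = x := by
  funext i; simp

lemma addCases_natAdd_eq {n₁ n₂ : ℕ} (x : Fin n₁ → ℤ) (y : Fin n₂ → ℤ) :
    (fun j => (fun k => Fin.addCases x y k) (Fin.natAdd n₁ j)) = y := by
  funext j; simp

lemma addCases_parts {n₁ n₂ : ℕ} (a : Fin (n₁ + n₂) → ℤ) :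
    (fun k => Fin.addCases (motive := fun _ => ℤ)
        (fun i => a (Fin.castAdd n₂ i)) (fun j => a (Fin.natAdd n₁ j)) k) = a := by
  funext k
  induction k using Fin.addCases with
  | left i => simp
  | right j => simp

variable {n₁ n₂ : ℕ} (c₁ c₂ : Kˣ)
variable (θ : AddMonoidAlgebra K (Fin (n₁ + n₂) → ℤ) →ₐ[K]
      (AddMonoidAlgebra K (Fin n₁ → ℤ)) ⊗[K] (AddMonoidAlgebra K (Fin n₂ → ℤ)))
variable (hθ : ∀ a : Fin (n₁ + n₂) → ℤ,
      θ (AddMonoidAlgebra.single a (1 : K)) =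
        (((c₁ ^ (∑ i : Fin n₁, a (Fin.castAdd n₂ i)) *
           c₂ ^ (∑ j : Fin n₂, a (Fin.natAdd n₁ j)) : Kˣ) : K)) •
          ((AddMonoidAlgebra.single (fun i => a (Fin.castAdd n₂ i)) (1 : K)) ⊗ₜ[K]
           (AddMonoidAlgebra.single (fun j => a (Fin.natAdd n₁ j)) (1 : K))))

include hθ in
/-- The key coefficient computation for `θ f`. -/
lemma key (f : AddMonoidAlgebra K (Fin (n₁ + n₂) → ℤ)) (x : Fin n₁ → ℤ) (y : Fin n₂ → ℤ) :
    (bb K n₁ n₂).repr (θ f) (x, y) =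
      ((c₁ ^ (∑ i, x i) * c₂ ^ (∑ j, y j) : Kˣ) : K) * f.coeff (fun k => Fin.addCases x y k) := by
  classical
  induction f using AddMonoidAlgebra.induction_linear with
  | zero => simp
  | add f g hf hg =>
      have : θ (f + g) = θ f + θ g := map_add θ f g
      rw [this, map_add, Finsupp.add_apply, hf, hg, AddMonoidAlgebra.coeff_add, Finsupp.add_apply, mul_add]
  | single a r =>
      have h1 : (AddMonoidAlgebra.single a r : AddMonoidAlgebra K (Fin (n₁ + n₂) → ℤ))
          = r • AddMonoidAlgebra.single a 1 := by
        rw [AddMonoidAlgebra.smul_single, smul_eq_mul, mul_one]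
      have e2 : (bb K n₁ n₂).repr (θ (AddMonoidAlgebra.single a r)) (x, y)
          = (r * ((c₁ ^ (∑ i, a (Fin.castAdd n₂ i)) *
              c₂ ^ (∑ j, a (Fin.natAdd n₁ j)) : Kˣ) : K)) *
            (if (((fun i => a (Fin.castAdd n₂ i)), (fun j => a (Fin.natAdd n₁ j)))
                = ((x, y) : (Fin n₁ → ℤ) × (Fin n₂ → ℤ))) then 1 else 0) := by
        rw [h1, map_smul, hθ a, map_smul, map_smul, bb_repr_tmul]
        simp only [Finsupp.smul_apply, Finsupp.single_apply, smul_eq_mul]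
        rw [mul_assoc]
      rw [e2, AddMonoidAlgebra.coeff_single, Finsupp.single_apply]
      by_cases h : a = fun k => Fin.addCases x y k
      · have hx : (fun i => a (Fin.castAdd n₂ i)) = x := by
          rw [h]; exact addCases_castAdd_eq x y
        have hy : (fun j => a (Fin.natAdd n₁ j)) = y := by
          rw [h]; exact addCases_natAdd_eq x y
        have hpair : (((fun i => a (Fin.castAdd n₂ i)), (fun j => a (Fin.natAdd n₁ j)))
            = ((x, y) : (Fin n₁ → ℤ) × (Fin n₂ → ℤ))) := by rw [hx, hy]
        have hsum1 : (∑ i, a (Fin.castAdd n₂ i)) = ∑ i, x i :=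
          Finset.sum_congr rfl fun i _ => congrFun hx i
        have hsum2 : (∑ j, a (Fin.natAdd n₁ j)) = ∑ j, y j :=
          Finset.sum_congr rfl fun j _ => congrFun hy j
        rw [if_pos hpair, if_pos h, hsum1, hsum2]
        ring
      · have hpair : ¬ (((fun i => a (Fin.castAdd n₂ i)), (fun j => a (Fin.natAdd n₁ j)))
            = ((x, y) : (Fin n₁ → ℤ) × (Fin n₂ → ℤ))) := by
          intro hc
          apply h
          have hx := congrArg Prod.fst hc
          have hy := congrArg Prod.snd hc
          simp only at hx hy
          rw [← hx, ← hy]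
          exact (addCases_parts a).symm
        rw [if_neg hpair, if_neg h, mul_zero, mul_zero]

/-- Bi-invariance of a coefficient family. -/
def InvG (g : ((Fin n₁ → ℤ) × (Fin n₂ → ℤ)) →₀ K) : Prop :=
  ∀ (σ₁ : Equiv.Perm (Fin n₁)) (σ₂ : Equiv.Perm (Fin n₂)) (x : Fin n₁ → ℤ) (y : Fin n₂ → ℤ),
    g (x ∘ ⇑σ₁, y ∘ ⇑σ₂) = g (x, y)

include hθ in
lemma symm_invG {f : AddMonoidAlgebra K (Fin (n₁ + n₂) → ℤ)} (hf : f ∈ symmSub K (n₁ + n₂)) :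
    InvG ((bb K n₁ n₂).repr (θ f)) := by
  intro σ₁ σ₂ x y
  rw [key c₁ c₂ θ hθ, key c₁ c₂ θ hθ]
  have hs1 : (∑ i, (x ∘ ⇑σ₁) i) = ∑ i, x i := Equiv.sum_comp σ₁ x
  have hs2 : (∑ j, (y ∘ ⇑σ₂) j) = ∑ j, y j := Equiv.sum_comp σ₂ y
  rw [hs1, hs2]
  congr 1
  -- f is invariant under the block permutation
  set τ : Equiv.Perm (Fin (n₁ + n₂)) := finSumFinEquiv.permCongr (σ₁.sumCongr σ₂) with hτ
  have hinv := hf τ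
  have hcoeff : ∀ b : Fin (n₁ + n₂) → ℤ, f.coeff (b ∘ ⇑τ) = f.coeff b := by
    intro b
    have := congrArg (fun g : AddMonoidAlgebra K (Fin (n₁ + n₂) → ℤ) => g.coeff b) hinv
    have hpa : (permAct K (n₁ + n₂) τ f).coeff b = f.coeff ((permAddEquiv (n₁ + n₂) τ).symm b) := by
      rw [permAct, AddMonoidAlgebra.coeff_domCongr]
    rw [hpa] at this
    have hsymm : ((permAddEquiv (n₁ + n₂) τ).symm b) = b ∘ ⇑τ := by
      rw [AddEquiv.symm_apply_eq]
      funext k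
      show b k = b (τ (τ.symm k))
      rw [Equiv.apply_symm_apply]
    rw [hsymm] at this
    exact this
  have hb : (fun k => Fin.addCases (motive := fun _ => ℤ) x y k) ∘ ⇑τ
      = fun k => Fin.addCases (motive := fun _ => ℤ) (x ∘ ⇑σ₁) (y ∘ ⇑σ₂) k := by
    funext k
    induction k using Fin.addCases with
    | left i =>
        have hτi : τ (Fin.castAdd n₂ i) = Fin.castAdd n₂ (σ₁ i) := by
          simp [hτ, Equiv.permCongr_apply]
        simp only [Function.comp_apply, hτi]
        simp
    | right j =>
        have hτj : τ (Fin.natAdd n₁ j) = Fin.natAdd n₁ (σ₂ j) := by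
          simp [hτ, Equiv.permCongr_apply]
        simp only [Function.comp_apply, hτj]
        simp
  rw [← hcoeff (fun k => Fin.addCases x y k), hb]

/-- Coefficients of the double orbit sum. -/
lemma repr_mOrb_tmul (x : Fin n₁ → ℤ) (y : Fin n₂ → ℤ) :
    (bb K n₁ n₂).repr ((mOrb K n₁ x) ⊗ₜ[K] (mOrb K n₂ y)) =
      ∑ u ∈ orb n₁ x, ∑ v ∈ orb n₂ y, Finsupp.single (u, v) (1 : K) := by
  rw [mOrb, mOrb, TensorProduct.sum_tmul]
  rw [map_sum]
  refine Finset.sum_congr rfl fun u _ => ?_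
  rw [TensorProduct.tmul_sum, map_sum]
  exact Finset.sum_congr rfl fun v _ => bb_repr_tmul u v

lemma double_single_apply {x : Fin n₁ → ℤ} {y : Fin n₂ → ℤ} (c : K)
    (q : (Fin n₁ → ℤ) × (Fin n₂ → ℤ)) :
    (∑ u ∈ orb n₁ x, ∑ v ∈ orb n₂ y, Finsupp.single (u, v) c) q =
      if q.1 ∈ orb n₁ x ∧ q.2 ∈ orb n₂ y then c else 0 := by
  classical
  rw [Finset.sum_apply']
  simp_rw [Finset.sum_apply', Finsupp.single_apply]
  rcases q with ⟨u₀, v₀⟩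
  by_cases hu : u₀ ∈ orb n₁ x
  · by_cases hv : v₀ ∈ orb n₂ y
    · rw [if_pos ⟨hu, hv⟩]
      rw [Finset.sum_eq_single u₀]
      · rw [Finset.sum_eq_single v₀]
        · simp
        · intro v hvmem hvne
          rw [if_neg (by simp [hvne])]
        · intro h; exact absurd hv h
      · intro u humem hune
        apply Finset.sum_eq_zero
        intro v _
        rw [if_neg (by simp [hune])]
      · intro h; exact absurd hu h
    · rw [if_neg (by tauto)]
      apply Finset.sum_eq_zero; intro u _
      apply Finset.sum_eq_zero; intro v hvmem
      rw [if_neg]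
      intro hc
      cases hc
      exact hv hvmem
  · rw [if_neg (by tauto)]
    apply Finset.sum_eq_zero; intro u humem
    apply Finset.sum_eq_zero; intro v _
    rw [if_neg]
    intro hc
    cases hc
    exact hu humem

set_option synthInstance.maxHeartbeats 1000000 in
set_option maxHeartbeats 1000000 in
/-- The reconstruction lemma: any bi-invariant coefficient family reconstructs to an element
of the range of the tensor product of the inclusions of invariant subalgebras. -/
lemma recon (N : ℕ) :
    ∀ g : ((Fin n₁ → ℤ) × (Fin n₂ → ℤ)) →₀ K, g.support.card ≤ N → InvG g →
      (bb K n₁ n₂).repr.symm g ∈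
        (Algebra.TensorProduct.map (symmSub K n₁).val (symmSub K n₂).val).range := by
  classical
  induction N with
  | zero =>
      intro g hcard _
      have : g = 0 := by
        rw [← Finsupp.support_eq_empty]
        exact Finset.card_eq_zero.1 (Nat.le_zero.1 hcard)
      rw [this, map_zero]
      exact Subalgebra.zero_mem _
  | succ N ih =>
      intro g hcard hInv
      rcases eq_or_ne g 0 with rfl | hg
      · rw [map_zero]; exact Subalgebra.zero_mem _
      obtain ⟨⟨x, y⟩, hp⟩ := Finsupp.support_nonempty_iff.2 hg
      set h : ((Fin n₁ → ℤ) × (Fin n₂ → ℤ)) →₀ K :=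
        ∑ u ∈ orb n₁ x, ∑ v ∈ orb n₂ y, Finsupp.single (u, v) (g (x, y)) with hh
      have hval : ∀ q, h q = if q.1 ∈ orb n₁ x ∧ q.2 ∈ orb n₂ y then g (x, y) else 0 :=
        double_single_apply _
      -- g is constant on the orbit product
      have hgconst : ∀ q : (Fin n₁ → ℤ) × (Fin n₂ → ℤ),
          q.1 ∈ orb n₁ x → q.2 ∈ orb n₂ y → g q = g (x, y) := by
        rintro ⟨u, v⟩ hu hv
        rcases mem_orb.1 hu with ⟨σ₁, hσ₁⟩
        rcases mem_orb.1 hv with ⟨σ₂, hσ₂⟩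
        have hσ₁' : x ∘ ⇑σ₁ = u := hσ₁
        have hσ₂' : y ∘ ⇑σ₂ = v := hσ₂
        rw [← hσ₁', ← hσ₂']
        exact hInv σ₁ σ₂ x y
      -- h reconstructs into the range
      have hmem_h : (bb K n₁ n₂).repr.symm h ∈
          (Algebra.TensorProduct.map (symmSub K n₁).val (symmSub K n₂).val).range := by
        have h1 : (bb K n₁ n₂).repr.symm h = g (x, y) • ((mOrb K n₁ x) ⊗ₜ[K] (mOrb K n₂ y)) := by
          rw [LinearEquiv.symm_apply_eq, map_smul, repr_mOrb_tmul, hh, Finset.smul_sum]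
          refine Finset.sum_congr rfl fun u _ => ?_
          rw [Finset.smul_sum]
          refine Finset.sum_congr rfl fun v _ => ?_
          rw [Finsupp.smul_single, smul_eq_mul, mul_one]
        rw [h1]
        refine Subalgebra.smul_mem _ ?_ _
        rw [AlgHom.mem_range]
        refine ⟨(⟨mOrb K n₁ x, mOrb_mem n₁ x⟩ : symmSub K n₁) ⊗ₜ[K]
          (⟨mOrb K n₂ y, mOrb_mem n₂ y⟩ : symmSub K n₂), ?_⟩
        rw [Algebra.TensorProduct.map_tmul]
        rfl
      -- the difference has smaller support
      have hsub : (g - h).support ⊆ g.support.erase (x, y) := by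
        intro q hq
        rw [Finsupp.mem_support_iff, Finsupp.sub_apply] at hq
        by_cases hq2 : q.1 ∈ orb n₁ x ∧ q.2 ∈ orb n₂ y
        · exfalso
          apply hq
          rw [hval q, if_pos hq2, hgconst q hq2.1 hq2.2, sub_self]
        · have hh0 : h q = 0 := by rw [hval q, if_neg hq2]
          rw [hh0, sub_zero] at hq
          refine Finset.mem_erase.2 ⟨?_, Finsupp.mem_support_iff.2 hq⟩
          rintro rfl
          exact hq2 ⟨self_mem_orb x, self_mem_orb y⟩
      have hcard' : (g - h).support.card ≤ N := by
        have h1 : (g - h).support.card ≤ (g.support.erase (x, y)).card :=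
          Finset.card_le_card hsub
        have h2 : (g.support.erase (x, y)).card = g.support.card - 1 :=
          Finset.card_erase_of_mem hp
        omega
      have hInv' : InvG (g - h) := by
        intro σ₁ σ₂ u v
        simp only [Finsupp.sub_apply, hInv σ₁ σ₂ u v, hval, comp_mem_orb_iff]
      have hmem_sub := ih (g - h) hcard' hInv'
      have : (bb K n₁ n₂).repr.symm g
          = (bb K n₁ n₂).repr.symm (g - h) + (bb K n₁ n₂).repr.symm h := by
        rw [← map_add, sub_add_cancel]
      rw [this]
      exact Subalgebra.add_mem _ hmem_sub hmem_h

end Aux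

/-- The substitution `Tᵢ ↦ c₁Xᵢ` (`i ≤ n₁`), `Tᵢ ↦ c₂Y_{i−n₁}` (`i > n₁`), restricted to
`Sₙ`-invariant Laurent polynomials, takes values in the tensor product of the `S_{n₁}`- and
`S_{n₂}`-invariant subrings, and this restricted map `θ` is injective. -/
theorem substitution_lands_in_invariants_and_injective
    (K : Type*) [Field K] (n₁ n₂ : ℕ) (c₁ c₂ : Kˣ)
    (θ : AddMonoidAlgebra K (Fin (n₁ + n₂) → ℤ) →ₐ[K]
      (AddMonoidAlgebra K (Fin n₁ → ℤ)) ⊗[K] (AddMonoidAlgebra K (Fin n₂ → ℤ)))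
    (hθ : ∀ a : Fin (n₁ + n₂) → ℤ,
      θ (AddMonoidAlgebra.single a (1 : K)) =
        (((c₁ ^ (∑ i : Fin n₁, a (Fin.castAdd n₂ i)) *
           c₂ ^ (∑ j : Fin n₂, a (Fin.natAdd n₁ j)) : Kˣ) : K)) •
          ((AddMonoidAlgebra.single (fun i => a (Fin.castAdd n₂ i)) (1 : K)) ⊗ₜ[K]
           (AddMonoidAlgebra.single (fun j => a (Fin.natAdd n₁ j)) (1 : K)))) :
    (∀ f ∈ symmSub K (n₁ + n₂),
      θ f ∈ (Algebra.TensorProduct.map (symmSub K n₁).val (symmSub K n₂).val).range) ∧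
    Function.Injective (θ.comp (symmSub K (n₁ + n₂)).val) := by
  constructor
  · intro f hf
    have h1 : θ f = (bb K n₁ n₂).repr.symm ((bb K n₁ n₂).repr (θ f)) := by
      rw [LinearEquiv.symm_apply_apply]
    rw [h1]
    exact recon ((bb K n₁ n₂).repr (θ f)).support.card _ le_rfl (symm_invG c₁ c₂ θ hθ hf)
  · -- injectivity: θ is injective on the whole algebra
    have hinj : ∀ u : AddMonoidAlgebra K (Fin (n₁ + n₂) → ℤ), θ u = 0 → u = 0 := by
      intro u hu
      ext a
      have hk := key c₁ c₂ θ hθ u (fun i => a (Fin.castAdd n₂ i)) (fun j => a (Fin.natAdd n₁ j))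
      rw [hu, map_zero, Finsupp.zero_apply, addCases_parts a] at hk
      have hc : ((c₁ ^ (∑ i, a (Fin.castAdd n₂ i)) *
          c₂ ^ (∑ j, a (Fin.natAdd n₁ j)) : Kˣ) : K) ≠ 0 := Units.ne_zero _
      have : u.coeff a = 0 := by
        rcases mul_eq_zero.1 hk.symm with h | h
        · exact absurd h hc
        · exact h
      simpa using this
    intro f₁ f₂ hf
    have h0 : θ (↑f₁ - ↑f₂) = 0 := by
      rw [map_sub]
      have : θ ↑f₁ = θ ↑f₂ := hf
      rw [this, sub_self]
    have := hinj _ h0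
    exact Subtype.ext (sub_eq_zero.1 this)
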